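/- For a > 0, b > 0, nonnegative integers h and a positive integer m, ∫_0^∞ t^h e^{-at} γ(m, bt) dt = a^{-(h+1)} [Γ(m) h! - ∑ₖ₌₀^{m-1} (b^k/k!) · Γ(h+k+1)·a^{h+1}/(a+b)^{h+k+1}]; equivalently, ∫_0^∞ t^h e^{-at} γ(m, bt) dt = (Γ(m) h!/a^{h+1}) - ∑_{k=0}^{m-1} (b^k (h+k)! (m-1)!)/(k! (a+b)^{h+k+1}). -/

import Mathlib

open MeasureTheory Real Set Finset


lemma int_pow_exp_integrable (p : ℕ) {c : ℝ} (hc : 0 < c) :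
    IntegrableOn (fun t : ℝ => t ^ p * Real.exp (-(c * t))) (Ioi 0) := by
  have := integrableOn_rpow_mul_exp_neg_mul_rpow (p := 1) (s := p) (b := c)
    (lt_of_lt_of_le neg_one_lt_zero (Nat.cast_nonneg p)) one_pos hc
  simp only [Real.rpow_one] at this
  refine this.congr_fun (fun t ht => ?_) measurableSet_Ioi
  dsimp only
  rw [Real.rpow_natCast]
  ring_nf

lemma int_pow_exp (p : ℕ) {c : ℝ} (hc : 0 < c) :
    ∫ t in Ioi (0:ℝ), t ^ p * Real.exp (-(c * t)) = (Nat.factorial p : ℝ) / c ^ (p + 1) := by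
  have := integral_rpow_mul_exp_neg_mul_Ioi (a := (p : ℝ) + 1) (r := c) (by positivity) hc
  rw [Real.Gamma_nat_eq_factorial, show ((p:ℝ) + 1 : ℝ) = ((p+1 : ℕ) : ℝ) by push_cast; ring,
    Real.rpow_natCast] at this
  rw [show ∫ t in Ioi (0:ℝ), t ^ p * Real.exp (-(c * t))
      = ∫ t in Ioi (0:ℝ), t ^ ((((p+1):ℕ):ℝ) - 1) * Real.exp (-(c * t)) from
    setIntegral_congr_fun measurableSet_Ioi (fun t ht => by
      rw [show ((((p+1):ℕ):ℝ) - 1) = (p:ℝ) by push_cast; ring,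
        Real.rpow_natCast]), this]
  rw [div_pow, one_pow]
  ring

lemma lower_gamma_eval (n : ℕ) (x : ℝ) :
    ∫ s in (0:ℝ)..x, s ^ n * Real.exp (-s)
      = (n.factorial : ℝ) -
        Real.exp (-x) * ∑ k ∈ Finset.range (n+1), ((n.factorial : ℝ) / k.factorial) * x ^ k := by
  set P : ℝ → ℝ := fun y => ∑ k ∈ Finset.range (n+1), ((n.factorial : ℝ) / k.factorial) * y ^ k
    with hPdef
  have hP : ∀ y : ℝ, HasDerivAt P (∑ k ∈ Finset.range n, ((n.factorial : ℝ) / k.factorial) * y ^ k) y := by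
    intro y
    have h1 : HasDerivAt P
        (∑ k ∈ Finset.range (n+1), ((n.factorial : ℝ) / k.factorial) * (k * y ^ (k-1))) y := by
      apply HasDerivAt.fun_sum
      intro k _
      exact (hasDerivAt_pow k y).const_mul _
    convert h1 using 1
    rw [Finset.sum_range_succ' (fun k => ((n.factorial : ℝ) / k.factorial) * (k * y ^ (k-1)))]
    simp only [Nat.cast_zero, Nat.factorial_zero, Nat.cast_one, zero_mul, mul_zero, add_zero,
      Nat.add_sub_cancel]
    refine Finset.sum_congr rfl (fun i _ => ?_)
    rw [Nat.factorial_succ]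
    push_cast
    have : (i.factorial : ℝ) ≠ 0 := Nat.cast_ne_zero.mpr i.factorial_ne_zero
    field_simp
  have hF : ∀ y : ℝ, HasDerivAt (fun y => -(Real.exp (-y) * P y)) (y ^ n * Real.exp (-y)) y := by
    intro y
    have hE : HasDerivAt (fun y : ℝ => Real.exp (-y)) (Real.exp (-y) * (-1)) y :=
      (hasDerivAt_id y).neg.exp
    have : HasDerivAt (fun y => -(Real.exp (-y) * P y)) _ y := (hE.mul (hP y)).neg
    convert this using 1
    have hsplit : P y = (∑ k ∈ Finset.range n, ((n.factorial : ℝ) / k.factorial) * y ^ k) + y ^ n := by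
      rw [hPdef]
      simp only
      rw [Finset.sum_range_succ, div_self (Nat.cast_ne_zero.mpr n.factorial_ne_zero), one_mul]
    rw [hsplit]
    ring
  rw [intervalIntegral.integral_eq_sub_of_hasDerivAt (fun t _ => hF t)
    ((by continuity : Continuous fun s : ℝ => s ^ n * Real.exp (-s)).intervalIntegrable 0 x)]
  have hP0 : P 0 = (n.factorial : ℝ) := by
    rw [hPdef]
    simp only
    rw [Finset.sum_eq_single 0]
    · simp
    · intro k _ hk
      simp [zero_pow hk]
    · simp
  simp [hP0]
  ring


/-- For `a, b > 0`, nonnegative integer `h` and positive integer `m`,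
`∫_0^∞ t^h e^{-at} γ(m, bt) dt
  = Γ(m) h!/a^{h+1} - ∑_{k=0}^{m-1} b^k (h+k)! (m-1)!/(k! (a+b)^{h+k+1})`. -/
theorem integral_poly_exp_lowerGamma (a b : ℝ) (ha : 0 < a) (hb : 0 < b)
    (h : ℕ) (m : ℕ) (hm : 0 < m) :
    (∫ t in Ioi (0:ℝ), t ^ h * Real.exp (-(a * t)) *
        ∫ s in (0:ℝ)..(b * t), s ^ (m - 1) * Real.exp (-s)) =
      (Nat.factorial (m - 1) : ℝ) * (Nat.factorial h) / a ^ (h + 1) -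
        ∑ k ∈ Finset.range m,
          b ^ k * (Nat.factorial (h + k)) * (Nat.factorial (m - 1)) /
            ((Nat.factorial k) * (a + b) ^ (h + k + 1)) := by
  have hab : 0 < a + b := by linarith
  have hm1 : m - 1 + 1 = m := Nat.succ_pred_eq_of_pos hm
  have he : ∀ t : ℝ, Real.exp (-(a*t)) * Real.exp (-(b*t)) = Real.exp (-((a+b)*t)) := by
    intro t; rw [← Real.exp_add]; ring_nf
  have hcongr : (∫ t in Ioi (0:ℝ), t ^ h * Real.exp (-(a * t)) *
        ∫ s in (0:ℝ)..(b * t), s ^ (m - 1) * Real.exp (-s))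
      = ∫ t in Ioi (0:ℝ),
          (((m-1).factorial : ℝ) * (t ^ h * Real.exp (-(a * t)))
            - ∑ k ∈ Finset.range m,
              (((m-1).factorial : ℝ) * b ^ k / k.factorial) *
                (t ^ (h + k) * Real.exp (-((a+b) * t)))) := by
    refine setIntegral_congr_fun measurableSet_Ioi (fun t ht => ?_)
    rw [lower_gamma_eval (m-1) (b*t), hm1, mul_sub]
    congr 1
    · ring
    · rw [Finset.mul_sum, Finset.mul_sum]
      refine Finset.sum_congr rfl (fun k _ => ?_)
      rw [show t ^ h * Real.exp (-(a * t)) *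
            (Real.exp (-(b * t)) * ((((m-1).factorial : ℝ) / k.factorial) * (b*t) ^ k))
          = (((m-1).factorial : ℝ) * b ^ k / k.factorial) *
            (t ^ (h + k) * (Real.exp (-(a*t)) * Real.exp (-(b*t)))) from by
        rw [mul_pow, pow_add]; ring, he t]
  rw [hcongr]
  have I1 : IntegrableOn (fun t : ℝ => ((m-1).factorial : ℝ) * (t ^ h * Real.exp (-(a * t)))) (Ioi 0) :=
    (int_pow_exp_integrable h ha).const_mul _
  have I2 : IntegrableOn (fun t : ℝ => ∑ k ∈ Finset.range m,
      (((m-1).factorial : ℝ) * b ^ k / k.factorial) *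
        (t ^ (h + k) * Real.exp (-((a+b) * t)))) (Ioi 0) :=
    integrable_finset_sum _ (fun k _ => (int_pow_exp_integrable (h+k) hab).const_mul _)
  rw [integral_sub I1 I2, MeasureTheory.integral_const_mul, int_pow_exp h ha,
    integral_finset_sum _ (fun k _ => (int_pow_exp_integrable (h+k) hab).const_mul _)]
  congr 1
  · ring
  · refine Finset.sum_congr rfl (fun k _ => ?_)
    rw [MeasureTheory.integral_const_mul, int_pow_exp (h+k) hab]
    have h1 : ((k.factorial : ℝ)) ≠ 0 := Nat.cast_ne_zero.mpr k.factorial_ne_zero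
    have h2 : (a+b) ^ (h+k+1) ≠ 0 := by positivity
    field_simp
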